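/- Let k be a field of characteristic zero, let n ≥ 1, let h ∈ k[x_0,…,x_n] be a homogeneous polynomial of degree d ∈ ℕ, and let f_0,…,f_n ∈ k(x_0,…,x_n) be homogeneous rational functions of degree e ∈ ℤ with e ≠ 0. Then e·Σ_{i=0}^n f_i·Jac(f_0,…,f_{i−1},h,f_{i+1},…,f_n) = d·h·Jac(f_0,…,f_n). -/

import Mathlib

set_option maxHeartbeats 1000000
set_option synthInstance.maxHeartbeats 400000


open MvPolynomial

noncomputable section

/-- `F = k(x_0,…,x_n)`, the fraction field of `k[x_0,…,x_n]` (in `n+1` variables). -/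
abbrev Fn (k : Type) [Field k] (n : ℕ) : Type :=
  FractionRing (MvPolynomial (Fin (n + 1)) k)

/-- The family `D` of derivations on `k(x_0,…,x_n)` consists of the canonical extensions
of the partial derivatives `∂/∂x_j` on `k[x_0,…,x_n]`. -/
def ExtendsPderiv (k : Type) [Field k] (n : ℕ)
    (D : Fin (n + 1) → Derivation k (Fn k n) (Fn k n)) : Prop :=
  ∀ (j : Fin (n + 1)) (p : MvPolynomial (Fin (n + 1)) k),
    D j (algebraMap (MvPolynomial (Fin (n + 1)) k) (Fn k n) p) =
      algebraMap (MvPolynomial (Fin (n + 1)) k) (Fn k n) (pderiv j p)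

/-- `Jac(f_0,…,f_n) = det (∂f_i/∂x_j)`. -/
def Jac (k : Type) [Field k] (n : ℕ)
    (D : Fin (n + 1) → Derivation k (Fn k n) (Fn k n))
    (f : Fin (n + 1) → Fn k n) : Fn k n :=
  Matrix.det (Matrix.of fun i j => D j (f i))

/-- `f ∈ k(x_0,…,x_n)` is homogeneous of degree `e ∈ ℤ`: it can be written as a quotient
`g/h` of nonzero homogeneous polynomials with `deg g − deg h = e`. -/
def IsHomogeneousRat (k : Type) [Field k] (n : ℕ) (f : Fn k n) (e : ℤ) : Prop :=
  ∃ (g h : MvPolynomial (Fin (n + 1)) k) (dg dh : ℕ),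
    g ≠ 0 ∧ h ≠ 0 ∧ g.IsHomogeneous dg ∧ h.IsHomogeneous dh ∧
    f = algebraMap (MvPolynomial (Fin (n + 1)) k) (Fn k n) g /
        algebraMap (MvPolynomial (Fin (n + 1)) k) (Fn k n) h ∧
    (dg : ℤ) - (dh : ℤ) = e

/-- Euler's identity for homogeneous polynomials. -/
theorem euler_poly {σ R : Type*} [Fintype σ] [DecidableEq σ] [CommRing R]
    (p : MvPolynomial σ R) (m : ℕ)
    (hp : p.IsHomogeneous m) : ∑ j, X j * pderiv j p = (m : MvPolynomial σ R) * p := by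
  have key : ∀ j, X j * pderiv j p = ∑ u ∈ p.support, monomial u (coeff u p * u j) := by
    intro j
    conv_lhs => rw [p.as_sum]
    rw [map_sum, Finset.mul_sum]
    refine Finset.sum_congr rfl fun u hu => ?_
    rw [pderiv_monomial]
    by_cases hj : u j = 0
    · simp [hj]
    · rw [X, monomial_mul, one_mul]
      congr 1
      rw [add_comm, tsub_add_cancel_of_le]
      exact Finsupp.single_le_iff.mpr (Nat.one_le_iff_ne_zero.mpr hj)
  rw [Finset.sum_congr rfl fun j _ => key j, Finset.sum_comm]
  conv_rhs => rw [p.as_sum, Finset.mul_sum]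
  refine Finset.sum_congr rfl fun u hu => ?_
  rw [← map_sum, ← Finset.mul_sum]
  have hdeg : (∑ j, u j) = m := by
    have h1 := hp (mem_support_iff.mp hu)
    rw [show (1 : σ → ℕ) = fun _ => 1 from rfl, ← Finsupp.degree_eq_weight_one] at h1
    rw [← h1, Finsupp.degree]
    exact (Finset.sum_subset (Finset.subset_univ _) (by simp +contextual)).symm
  rw [← Nat.cast_sum, hdeg]
  rw [show ((m : ℕ) : MvPolynomial σ R) = C (m : R) by rfl, C_mul_monomial, mul_comm]

/-- Euler's identity for polynomials, pushed into the fraction field. -/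
theorem euler_poly_frac (k : Type) [Field k] (n : ℕ)
    (D : Fin (n + 1) → Derivation k (Fn k n) (Fn k n)) (hD : ExtendsPderiv k n D)
    (p : MvPolynomial (Fin (n + 1)) k) (m : ℕ) (hp : p.IsHomogeneous m) :
    ∑ j, algebraMap (MvPolynomial (Fin (n + 1)) k) (Fn k n) (X j) *
        D j (algebraMap (MvPolynomial (Fin (n + 1)) k) (Fn k n) p) =
      (m : Fn k n) * algebraMap (MvPolynomial (Fin (n + 1)) k) (Fn k n) p := by
  simp_rw [fun j => hD j p, ← map_mul, ← map_sum, euler_poly p m hp, map_mul, map_natCast]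

/-- Euler's identity for homogeneous rational functions. -/
theorem euler_rat (k : Type) [Field k] (n : ℕ)
    (D : Fin (n + 1) → Derivation k (Fn k n) (Fn k n)) (hD : ExtendsPderiv k n D)
    (f : Fn k n) (e : ℤ) (hf : IsHomogeneousRat k n f e) :
    ∑ j, algebraMap (MvPolynomial (Fin (n + 1)) k) (Fn k n) (X j) * D j f
      = (e : Fn k n) * f := by
  obtain ⟨g, p, dg, dp, hg0, hp0, hgH, hpH, hfeq, hde⟩ := hf
  set φ := algebraMap (MvPolynomial (Fin (n + 1)) k) (Fn k n) with hφ
  have hp0' : φ p ≠ 0 := by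
    intro hc
    exact hp0 (IsFractionRing.injective (MvPolynomial (Fin (n + 1)) k) (Fn k n)
      (by rw [map_zero]; exact hc))
  have eg := euler_poly_frac k n D hD g dg hgH
  have ep := euler_poly_frac k n D hD p dp hpH
  subst hfeq
  have expand : ∀ j, φ (X j) * D j (φ g / φ p) =
      ((φ p)⁻¹) ^ 2 * (φ p * (φ (X j) * D j (φ g)) - φ g * (φ (X j) * D j (φ p))) := by
    intro j
    rw [Derivation.leibniz_div]
    simp only [smul_eq_mul, smul_sub]
    ring
  rw [Finset.sum_congr rfl fun j _ => expand j, ← Finset.mul_sum, Finset.sum_sub_distrib,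
    ← Finset.mul_sum, ← Finset.mul_sum, eg, ep]
  have hE : (e : Fn k n) = (dg : Fn k n) - (dp : Fn k n) := by
    rw [← hde]; push_cast; ring
  rw [hE]
  field_simp
  ring

/-- Euler-type identity: if `char k = 0`, `h` is homogeneous of degree `d` and
`f_0,…,f_n` are homogeneous rational functions of degree `e ≠ 0`, then
`e·Σ_i f_i·Jac(f_0,…,f_{i−1},h,f_{i+1},…,f_n) = d·h·Jac(f_0,…,f_n)`. -/
theorem euler_jac_identity (k : Type) [Field k] [CharZero k] (n : ℕ) (hn : 1 ≤ n)
    (D : Fin (n + 1) → Derivation k (Fn k n) (Fn k n)) (hD : ExtendsPderiv k n D)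
    (h : MvPolynomial (Fin (n + 1)) k) (d : ℕ) (hh : h.IsHomogeneous d)
    (f : Fin (n + 1) → Fn k n) (e : ℤ) (he : e ≠ 0)
    (hf : ∀ i, IsHomogeneousRat k n (f i) e) :
    (e : Fn k n) * ∑ i : Fin (n + 1), f i *
        Jac k n D (Function.update f i
          (algebraMap (MvPolynomial (Fin (n + 1)) k) (Fn k n) h)) =
      (d : Fn k n) * algebraMap (MvPolynomial (Fin (n + 1)) k) (Fn k n) h *
        Jac k n D f := by
  classical
  set φ := algebraMap (MvPolynomial (Fin (n + 1)) k) (Fn k n) with hφ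
  set A : Matrix (Fin (n + 1)) (Fin (n + 1)) (Fn k n) := Matrix.of fun i j => D j (f i) with hA
  set v : Fin (n + 1) → Fn k n := fun j => D j (φ h) with hv
  set x : Fin (n + 1) → Fn k n := fun j => φ (X j) with hx
  have hAx : A.mulVec x = fun i => (e : Fn k n) * f i := by
    funext i
    rw [Matrix.mulVec, ← euler_rat k n D hD (f i) e (hf i)]
    simp only [dotProduct, hA, Matrix.of_apply, hx]
    exact Finset.sum_congr rfl fun j _ => mul_comm _ _
  have hJacU : ∀ i, Jac k n D (Function.update f i (φ h)) = (A.updateRow i v).det := by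
    intro i
    unfold Jac
    congr 1
    ext i' j
    by_cases hi : i' = i
    · subst hi; simp [Matrix.updateRow_self, hv]
    · simp [Matrix.updateRow_ne hi, Function.update_of_ne hi, hA]
  have hdet : ∀ i, (A.updateRow i v).det = Matrix.cramer A.transpose v i := by
    intro i
    rw [Matrix.cramer_apply, ← Matrix.det_transpose (Matrix.updateCol A.transpose i v),
      ← Matrix.updateRow_transpose, Matrix.transpose_transpose]
  have hvsum : ∑ j, x j * v j = (d : Fn k n) * φ h := euler_poly_frac k n D hD h d hh
  calc (e : Fn k n) * ∑ i, f i * Jac k n D (Function.update f i (φ h))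
      = ∑ i, ((e : Fn k n) * f i) * Matrix.cramer A.transpose v i := by
        rw [Finset.mul_sum]
        exact Finset.sum_congr rfl fun i _ => by rw [hJacU i, hdet i]; ring
    _ = dotProduct (A.mulVec x) (Matrix.cramer A.transpose v) := by
        rw [hAx]; rfl
    _ = dotProduct x (Matrix.mulVec A.transpose (Matrix.cramer A.transpose v)) := by
        rw [dotProduct_comm, Matrix.dotProduct_mulVec, ← Matrix.mulVec_transpose,
          dotProduct_comm]
    _ = dotProduct x (Matrix.det A.transpose • v) := by rw [Matrix.mulVec_cramer]
    _ = A.det * ∑ j, x j * v j := by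
        rw [Matrix.det_transpose, dotProduct, Finset.mul_sum]
        exact Finset.sum_congr rfl fun j _ => by simp [Pi.smul_apply, smul_eq_mul]; ring
    _ = (d : Fn k n) * φ h * Jac k n D f := by rw [hvsum, Jac]; ring
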